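/- Let P be a finite nonabelian p-group all of whose proper subgroups are abelian, and H₀ a normal subgroup of P. Then the quotient P/H₀ is cyclic if and only if H₀ is not contained in the Frattini subgroup Φ(P). -/
import Mathlib

open Subgroup

section Aux

variable {P : Type*} [Group P] [Finite P]

private lemma mem_frattini_iff' {x : P} :
    x ∈ frattini P ↔ ∀ M : Subgroup P, IsCoatom M → x ∈ M := by
  simp only [frattini, Order.radical, Subgroup.mem_iInf, Set.mem_setOf_eq]

/-- Every subgroup of the quotient by a normal coatom is `⊥` or `⊤`. -/
private lemma quotient_coatom_subgroups {M : Subgroup P} [M.Normal] (hM : IsCoatom M)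
    (S : Subgroup (P ⧸ M)) : S = ⊥ ∨ S = ⊤ := by
  have hker : M ≤ S.comap (QuotientGroup.mk' M) := by
    intro x hx
    have : (QuotientGroup.mk' M) x = 1 := (QuotientGroup.eq_one_iff x).mpr hx
    rw [Subgroup.mem_comap, this]
    exact S.one_mem
  have hmc : S.comap (QuotientGroup.mk' M) = M ∨ S.comap (QuotientGroup.mk' M) = ⊤ := by
    rcases hker.lt_or_eq with h | h
    · exact Or.inr (hM.2 _ h)
    · exact Or.inl h.symm
  have hms := Subgroup.map_comap_eq_self_of_surjective
    (QuotientGroup.mk'_surjective M) S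
  rcases hmc with h | h
  · left
    rw [← hms, h, eq_bot_iff]
    rintro _ ⟨y, hy, rfl⟩
    simpa [Subgroup.mem_bot] using (QuotientGroup.eq_one_iff y).mpr hy
  · right
    rw [← hms, h]
    exact Subgroup.map_top_of_surjective _ (QuotientGroup.mk'_surjective M)

/-- For a coatom `M` of a finite `p`-group: `M` is normal, contains all commutators,
and contains all `p`-th powers. -/
private lemma coatom_facts {p : ℕ} (hp : p.Prime) (hpgrp : IsPGroup p P)
    {M : Subgroup P} (hM : IsCoatom M) :
    M.Normal ∧ (∀ g h : P, g * h * g⁻¹ * h⁻¹ ∈ M) ∧ (∀ g : P, g ^ p ∈ M) := by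
  haveI : Fact p.Prime := ⟨hp⟩
  haveI : Group.IsNilpotent P := hpgrp.isNilpotent
  have hnorm : M.Normal :=
    NormalizerCondition.normal_of_coatom M normalizerCondition_of_isNilpotent hM
  haveI := hnorm
  obtain ⟨y, hy⟩ : ∃ y : P, y ∉ M := by
    by_contra h
    push_neg at h
    exact hM.1 (Subgroup.eq_top_iff' M |>.mpr h)
  have hy1 : (QuotientGroup.mk y : P ⧸ M) ≠ 1 := by
    simpa [QuotientGroup.eq_one_iff] using hy
  have hz : zpowers (QuotientGroup.mk y : P ⧸ M) = ⊤ := by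
    rcases quotient_coatom_subgroups hM (zpowers (QuotientGroup.mk y : P ⧸ M)) with h | h
    · exfalso
      have hmem := mem_zpowers (QuotientGroup.mk y : P ⧸ M)
      rw [h] at hmem
      exact hy1 (by simpa [Subgroup.mem_bot] using hmem)
    · exact h
  have hcomm : ∀ u v : P ⧸ M, u * v = v * u := by
    intro u v
    have hu : u ∈ zpowers (QuotientGroup.mk y : P ⧸ M) := hz ▸ Subgroup.mem_top u
    have hv : v ∈ zpowers (QuotientGroup.mk y : P ⧸ M) := hz ▸ Subgroup.mem_top v
    obtain ⟨m, rfl⟩ := hu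
    obtain ⟨n, rfl⟩ := hv
    exact ((Commute.refl _).zpow_zpow m n)
  have hpow : ∀ z : P ⧸ M, z ^ p = 1 := by
    intro z
    rcases quotient_coatom_subgroups hM (zpowers (z ^ p)) with h | h
    · have hmem := mem_zpowers (z ^ p)
      rw [h] at hmem
      simpa [Subgroup.mem_bot] using hmem
    · have hzz : zpowers z = ⊤ := by
        rw [eq_top_iff, ← h]
        exact zpowers_le.mpr (pow_mem (mem_zpowers z) p)
      obtain ⟨k, hk⟩ := (hpgrp.to_quotient M) z
      have hdvd : orderOf z ∣ p ^ k := orderOf_dvd_of_pow_eq_one hk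
      obtain ⟨j, hjk, hje⟩ := (Nat.dvd_prime_pow hp).mp hdvd
      rcases Nat.eq_zero_or_pos j with rfl | hjpos
      · have : z = 1 := orderOf_eq_one_iff.mp (by simpa using hje)
        simp [this]
      · exfalso
        have hopow : orderOf (z ^ p) = p ^ (j - 1) := by
          rw [orderOf_pow, hje]
          have hg : Nat.gcd (p ^ j) p = p := Nat.gcd_eq_right (dvd_pow_self p hjpos.ne')
          rw [hg]
          rcases Nat.exists_eq_add_of_lt hjpos with ⟨i, hi⟩
          have : j = i + 1 := by omega
          subst this
          simp [pow_succ, Nat.mul_div_cancel _ hp.pos]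
        have hcards : Nat.card (zpowers (z ^ p)) = Nat.card (zpowers z) := by
          rw [h, hzz]
        rw [Nat.card_zpowers, Nat.card_zpowers, hopow, hje] at hcards
        have h1 : p ^ (j - 1) < p ^ j := Nat.pow_lt_pow_right hp.one_lt (by omega)
        omega
  refine ⟨hnorm, ?_, ?_⟩
  · intro g h
    rw [← QuotientGroup.eq_one_iff]
    simp only [QuotientGroup.mk_mul, QuotientGroup.mk_inv]
    rw [hcomm (QuotientGroup.mk g) (QuotientGroup.mk h)]
    group
  · intro g
    rw [← QuotientGroup.eq_one_iff, QuotientGroup.mk_pow]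
    exact hpow _

/-- If the image of `c` generates `P ⧸ N`, then `closure {c} ⊔ N = ⊤`. -/
private lemma closure_sup_of_quotient_gen {N : Subgroup P} [N.Normal] {c : P}
    (hc : ∀ w : P ⧸ N, w ∈ zpowers (QuotientGroup.mk c : P ⧸ N)) :
    closure {c} ⊔ N = ⊤ := by
  rw [eq_top_iff]
  intro y _
  obtain ⟨n, hn⟩ := hc (QuotientGroup.mk y)
  have : (QuotientGroup.mk (c ^ n) : P ⧸ N) = QuotientGroup.mk y := by
    rw [QuotientGroup.mk_zpow]; exact hn
  have hmem : (c ^ n)⁻¹ * y ∈ N := (QuotientGroup.eq).mp this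
  have hy : y = c ^ n * ((c ^ n)⁻¹ * y) := (mul_inv_cancel_left _ _).symm
  rw [hy]
  exact mul_mem (mem_sup_left (zpow_mem (subset_closure (Set.mem_singleton c)) n)) (mem_sup_right hmem)

end Aux

theorem stmt_8 {P : Type*} [Group P] [Finite P] (p : ℕ) (hp : p.Prime)
    (hpgrp : IsPGroup p P)
    (hna : ¬ ∀ a b : P, a * b = b * a)
    (hprop : ∀ H : Subgroup P, H ≠ ⊤ → ∀ a b : H, a * b = b * a)
    (H₀ : Subgroup P) (hH₀ : H₀.Normal) :
    IsCyclic (P ⧸ H₀) ↔ ¬ H₀ ≤ frattini P := by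
  haveI : Fact p.Prime := ⟨hp⟩
  -- two noncommuting generators
  push_neg at hna
  obtain ⟨a, b, hab⟩ := hna
  have htop : closure ({a, b} : Set P) = ⊤ := by
    by_contra h
    have ha : a ∈ closure ({a, b} : Set P) := subset_closure (by simp)
    have hb : b ∈ closure ({a, b} : Set P) := subset_closure (by simp)
    have := hprop _ h ⟨a, ha⟩ ⟨b, hb⟩
    exact hab (congrArg Subtype.val this)
  -- commutators and p-th powers lie in the Frattini subgroup
  have hcommF : ∀ g h : P, g * h * g⁻¹ * h⁻¹ ∈ frattini P := by
    intro g h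
    rw [mem_frattini_iff']
    intro M hM
    exact (coatom_facts hp hpgrp hM).2.1 g h
  have hpowF : ∀ g : P, g ^ p ∈ frattini P := by
    intro g
    rw [mem_frattini_iff']
    intro M hM
    exact (coatom_facts hp hpgrp hM).2.2 g
  constructor
  · -- cyclic quotient → H₀ not inside Frattini
    intro hcyc hle
    -- P ⧸ frattini P is cyclic
    have hsurj : Function.Surjective
        (QuotientGroup.map H₀ (frattini P) (MonoidHom.id P) hle) := by
      intro w
      induction w using QuotientGroup.induction_on with
      | H x => exact ⟨QuotientGroup.mk x, rfl⟩
    haveI : IsCyclic (P ⧸ frattini P) := isCyclic_of_surjective _ hsurj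
    obtain ⟨g, hg⟩ := (inferInstance : IsCyclic (P ⧸ frattini P))
    obtain ⟨c, rfl⟩ := QuotientGroup.mk'_surjective (frattini P) g
    have hsup : closure {c} ⊔ frattini P = ⊤ := closure_sup_of_quotient_gen (fun w => hg w)
    have hctop : closure ({c} : Set P) = ⊤ := frattini_nongenerating hsup
    have : a ∈ zpowers c := by
      rw [zpowers_eq_closure, hctop]; trivial
    obtain ⟨m, rfl⟩ := this
    have : b ∈ zpowers c := by
      rw [zpowers_eq_closure, hctop]; trivial
    obtain ⟨n, rfl⟩ := this
    exact hab ((Commute.refl c).zpow_zpow m n)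
  · -- H₀ not inside Frattini → cyclic quotient
    intro hnle
    obtain ⟨x, hxH, hxF⟩ := SetLike.not_le_iff_exists.mp hnle
    set K : Subgroup P := H₀ ⊔ frattini P with hK
    haveI hKn : K.Normal := Subgroup.sup_normal H₀ (frattini P)
    -- the Frattini quotient V
    set V := P ⧸ frattini P with hV
    have hcommV : ∀ u v : V, u * v = v * u := by
      intro u v
      induction u using QuotientGroup.induction_on with
      | H g =>
      induction v using QuotientGroup.induction_on with
      | H h =>
      have h1 : ((QuotientGroup.mk (g * h * g⁻¹ * h⁻¹) : V)) = 1 :=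
        (QuotientGroup.eq_one_iff _).mpr (hcommF g h)
      simp only [QuotientGroup.mk_mul, QuotientGroup.mk_inv] at h1
      have := mul_eq_one_iff_eq_inv.mp h1
      calc (QuotientGroup.mk g : V) * QuotientGroup.mk h
          = (QuotientGroup.mk g * QuotientGroup.mk h * (QuotientGroup.mk g)⁻¹) *
            QuotientGroup.mk g := by group
        _ = QuotientGroup.mk h * QuotientGroup.mk g := by rw [this]; group
    have hpowV : ∀ v : V, v ^ p = 1 := by
      intro v
      induction v using QuotientGroup.induction_on with
      | H g => exact (QuotientGroup.eq_one_iff _).mpr (hpowF g)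
    -- V is generated by the images of a and b
    have hVgen : ∀ v : V, ∃ m n : ℤ,
        v = (QuotientGroup.mk a : V) ^ m * (QuotientGroup.mk b : V) ^ n := by
      have hVtop : closure ({(QuotientGroup.mk a : V), QuotientGroup.mk b} : Set V) = ⊤ := by
        have := Subgroup.map_top_of_surjective (QuotientGroup.mk' (frattini P))
          (QuotientGroup.mk'_surjective (frattini P))
        rw [← htop, MonoidHom.map_closure] at this
        rw [← this, Set.image_pair]
        rfl
      intro v
      have hv : v ∈ closure ({(QuotientGroup.mk a : V), QuotientGroup.mk b} : Set V) := by
        rw [hVtop]; trivial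
      induction hv using Subgroup.closure_induction with
      | mem z hz =>
        simp only [Set.mem_insert_iff, Set.mem_singleton_iff] at hz
        rcases hz with rfl | rfl
        · exact ⟨1, 0, by simp⟩
        · exact ⟨0, 1, by simp⟩
      | one => exact ⟨0, 0, by simp⟩
      | mul u w _ _ hu hw =>
        obtain ⟨m, n, rfl⟩ := hu
        obtain ⟨m', n', rfl⟩ := hw
        refine ⟨m + m', n + n', ?_⟩
        have hc : Commute ((QuotientGroup.mk b : V) ^ n) ((QuotientGroup.mk a : V) ^ m') :=
          hcommV _ _
        rw [zpow_add, zpow_add]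
        calc (QuotientGroup.mk a : V) ^ m * (QuotientGroup.mk b : V) ^ n *
              ((QuotientGroup.mk a : V) ^ m' * (QuotientGroup.mk b : V) ^ n')
            = (QuotientGroup.mk a : V) ^ m * ((QuotientGroup.mk b : V) ^ n *
              (QuotientGroup.mk a : V) ^ m') * (QuotientGroup.mk b : V) ^ n' := by group
          _ = (QuotientGroup.mk a : V) ^ m * ((QuotientGroup.mk a : V) ^ m' *
              (QuotientGroup.mk b : V) ^ n) * (QuotientGroup.mk b : V) ^ n' := by
              rw [hc.eq]
          _ = (QuotientGroup.mk a : V) ^ m * (QuotientGroup.mk a : V) ^ m' *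
              ((QuotientGroup.mk b : V) ^ n * (QuotientGroup.mk b : V) ^ n') := by group
      | inv u _ hu =>
        obtain ⟨m, n, rfl⟩ := hu
        refine ⟨-m, -n, ?_⟩
        rw [mul_inv_rev, ← zpow_neg, ← zpow_neg]
        exact hcommV _ _
    -- card V ≤ p ^ 2
    have hcardV : Nat.card V ≤ p ^ 2 := by
      have hsurjF : Function.Surjective (fun ij : Fin p × Fin p =>
          (QuotientGroup.mk a : V) ^ (ij.1 : ℕ) * (QuotientGroup.mk b : V) ^ (ij.2 : ℕ)) := by
        intro v
        obtain ⟨m, n, rfl⟩ := hVgen v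
        have key : ∀ (u : V) (m : ℤ), ∃ k : Fin p, u ^ m = u ^ (k : ℕ) := by
          intro u m
          have hpz : (0 : ℤ) < (p : ℤ) := by exact_mod_cast hp.pos
          refine ⟨⟨(m % p).toNat, ?_⟩, ?_⟩
          · have := Int.emod_lt_of_pos m hpz
            have := Int.emod_nonneg m hpz.ne'
            omega
          · have hup : u ^ (p : ℤ) = 1 := by
              rw [zpow_natCast]; exact hpowV u
            have h0 : 0 ≤ m % p := Int.emod_nonneg m hpz.ne'
            calc u ^ m = u ^ ((p : ℤ) * (m / p) + m % p) := by rw [Int.mul_ediv_add_emod]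
              _ = (u ^ (p : ℤ)) ^ (m / p) * u ^ (m % p) := by rw [zpow_add, zpow_mul]
              _ = u ^ (m % p) := by rw [hup]; simp
              _ = u ^ (((m % p).toNat : ℤ)) := by rw [Int.toNat_of_nonneg h0]
              _ = _ := by rw [zpow_natCast]
        obtain ⟨k₁, hk₁⟩ := key (QuotientGroup.mk a : V) m
        obtain ⟨k₂, hk₂⟩ := key (QuotientGroup.mk b : V) n
        exact ⟨(k₁, k₂), by simp [hk₁, hk₂]⟩
      have := Nat.card_le_card_of_surjective _ hsurjF
      simpa [Nat.card_eq_fintype_card, pow_two] using this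
    -- the quotient by K is small
    set W := P ⧸ K with hW
    have hKF : frattini P ≤ K := le_sup_right
    set π : V →* W := QuotientGroup.map (frattini P) K (MonoidHom.id P) hKF with hπ
    have hπsurj : Function.Surjective π := by
      intro w
      induction w using QuotientGroup.induction_on with
      | H g => exact ⟨QuotientGroup.mk g, rfl⟩
    have hxker : (QuotientGroup.mk x : V) ∈ π.ker := by
      rw [MonoidHom.mem_ker]
      have : π (QuotientGroup.mk x) = (QuotientGroup.mk x : W) := rfl
      rw [this, QuotientGroup.eq_one_iff]
      exact (le_sup_left : H₀ ≤ H₀ ⊔ frattini P) hxH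
    have hxne : (QuotientGroup.mk x : V) ≠ 1 := by
      simpa [QuotientGroup.eq_one_iff] using hxF
    haveI : Nontrivial π.ker := by
      exact ⟨⟨_, hxker⟩, 1, fun h => hxne (Subtype.ext_iff.mp h)⟩
    have hkercard : 2 ≤ Nat.card π.ker := Finite.one_lt_card
    have hcardeq : Nat.card V = Nat.card W * Nat.card π.ker := by
      have h1 := Subgroup.card_eq_card_quotient_mul_card_subgroup (π.ker : Subgroup V)
      have h2 : Nat.card (V ⧸ π.ker) = Nat.card W :=
        Nat.card_congr (QuotientGroup.quotientKerEquivOfSurjective π hπsurj).toEquiv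
      rw [h1, h2]
    obtain ⟨n, hn⟩ := IsPGroup.exists_card_eq (hpgrp.to_quotient K)
    have hWsmall : Nat.card W = 1 ∨ Nat.card W = p := by
      rcases Nat.lt_or_ge n 2 with h | h
      · interval_cases n
        · left; simpa using hn
        · right; simpa using hn
      · exfalso
        have : p ^ 2 ≤ p ^ n := Nat.pow_le_pow_right hp.pos h
        have hWc : p ^ 2 ≤ Nat.card W := hn ▸ this
        have hVc : Nat.card V < Nat.card W * Nat.card π.ker := by
          have hWpos : 0 < Nat.card W := Nat.card_pos
          calc Nat.card V ≤ p ^ 2 := hcardV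
            _ ≤ Nat.card W := hWc
            _ < Nat.card W * 2 := by omega
            _ ≤ Nat.card W * Nat.card π.ker := Nat.mul_le_mul_left _ hkercard
        omega
    -- W is cyclic, pick a generator and lift it
    obtain ⟨c, hc⟩ : ∃ c : P, ∀ w : W, w ∈ zpowers (QuotientGroup.mk c : W) := by
      rcases hWsmall with h | h
      · haveI : Subsingleton W := Nat.card_eq_one_iff_unique.mp h |>.1
        exact ⟨1, fun w => by rw [Subsingleton.elim w 1]; exact one_mem _⟩
      · haveI : IsCyclic W := isCyclic_of_prime_card h
        obtain ⟨g, hg⟩ := (inferInstance : IsCyclic W)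
        obtain ⟨c, rfl⟩ := QuotientGroup.mk'_surjective K g
        exact ⟨c, fun w => hg w⟩
    have hsupK : closure {c} ⊔ K = ⊤ := closure_sup_of_quotient_gen hc
    have hsup2 : (closure {c} ⊔ H₀) ⊔ frattini P = ⊤ := by
      rw [sup_assoc]; exact hsupK
    have hgen : closure {c} ⊔ H₀ = ⊤ := frattini_nongenerating hsup2
    -- conclude P ⧸ H₀ is cyclic
    have hmap : Subgroup.map (QuotientGroup.mk' H₀) (closure {c} ⊔ H₀) = ⊤ := by
      rw [hgen]
      exact Subgroup.map_top_of_surjective _ (QuotientGroup.mk'_surjective H₀)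
    rw [Subgroup.map_sup] at hmap
    have hH₀bot : Subgroup.map (QuotientGroup.mk' H₀) H₀ = ⊥ := by
      rw [eq_bot_iff]
      rintro _ ⟨y, hy, rfl⟩
      simpa [Subgroup.mem_bot] using (QuotientGroup.eq_one_iff y).mpr hy
    rw [hH₀bot, sup_bot_eq, MonoidHom.map_closure, Set.image_singleton] at hmap
    refine ⟨⟨(QuotientGroup.mk' H₀) c, fun q => ?_⟩⟩
    have hq : q ∈ Subgroup.closure ({(QuotientGroup.mk' H₀) c} : Set (P ⧸ H₀)) := by
      rw [hmap]; trivial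
    rw [← zpowers_eq_closure] at hq
    exact hq
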